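/- Let r ≥ 3, k ≥ r+4, t = ⌊(k-1)/2⌋, and define u_r(n,k,s) = max(C(s,2), C(s,r)) + (n-s)·max(k-s, C(k-s, r-1)). Then for every n ≥ k and every integer s with k-t ≤ s ≤ k-2, u_r(n,k,s) ≤ f_r(n,k) - C(r,2), where f_r(n,k) = ⌊(n-1)/(k-2)⌋·C(k-1,r) + (m-1) if 1 ≤ m ≤ r and = ⌊(n-1)/(k-2)⌋·C(k-1,r) + C(m,r) if r+1 ≤ m ≤ k-2, with n ≡ m mod (k-2), 1 ≤ m ≤ k-2. -/

import Mathlib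

/-- `u_r(n,k,s) = max(C(s,2), C(s,r)) + (n-s)·max(k-s, C(k-s, r-1))`. -/
def uEG (r n k s : ℕ) : ℕ :=
  max (s.choose 2) (s.choose r) + (n - s) * max (k - s) ((k - s).choose (r - 1))

/-- `f_r(n,k)` where `n = (k-2)·⌊(n-1)/(k-2)⌋ + m`, `1 ≤ m ≤ k-2`. -/
def fEG (r n k : ℕ) : ℕ :=
  (n - 1) / (k - 2) * (k - 1).choose r +
    (let m := n - (k - 2) * ((n - 1) / (k - 2));
     if m ≤ r then m - 1 else m.choose r)

/-- the additive "remainder" part of `fEG`. -/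
def gg (r m : ℕ) : ℕ := if m ≤ r then m - 1 else m.choose r

lemma fEG_eq (r n k : ℕ) :
    fEG r n k = (n - 1) / (k - 2) * (k - 1).choose r +
      gg r (n - (k - 2) * ((n - 1) / (k - 2))) := rfl

lemma gg_of_gt {r m : ℕ} (h : r < m) : gg r m = m.choose r := by
  simp [gg, Nat.not_le.mpr h]


lemma pred_mul (a x : ℕ) (h : 1 ≤ a) : a * x = x + (a-1) * x := by
  obtain ⟨w, rfl⟩ : ∃ w, a = w+1 := ⟨a-1, by omega⟩
  rw [Nat.add_sub_cancel, Nat.add_mul, Nat.one_mul]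
  omega

lemma mul_split (x a b c d : ℕ) (h : a + b = c + d) : a*x + b*x = c*x + d*x := by
  rw [← Nat.add_mul, ← Nat.add_mul, h]

lemma choose_mid_aux (n b : ℕ) : ∀ a, b ≤ a → 2*a ≤ n → n.choose b ≤ n.choose a := by
  intro a
  induction a with
  | zero => intro h _; interval_cases b; exact le_rfl
  | succ a ih =>
    intro hba h2
    rcases Nat.eq_or_lt_of_le hba with h | h
    · rw [h]
    · have h1 : n.choose b ≤ n.choose a := ih (by omega) (by omega)
      refine h1.trans (Nat.choose_le_succ_of_lt_half_left ?_)
      omega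

/-- monotonicity of binomial coefficients towards the middle -/
lemma choose_mid {n a b : ℕ} (h1 : b ≤ a) (h2 : a + b ≤ n) : n.choose b ≤ n.choose a := by
  rcases le_or_gt (2*a) n with h | h
  · exact choose_mid_aux n b a h1 h
  · have han : a ≤ n := by omega
    have hsymm : n.choose (n - a) = n.choose a := Nat.choose_symm han
    rw [← hsymm]
    exact choose_mid_aux n b (n-a) (by omega) (by omega)

lemma pascal_chain (a r : ℕ) : ∀ b, a.choose (r+1) + b * a.choose r ≤ (a+b).choose (r+1) := by
  intro b
  induction b with
  | zero => simp
  | succ b ih =>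
    have h1 : (a+(b+1)).choose (r+1) = (a+b).choose r + (a+b).choose (r+1) := by
      rw [show a+(b+1) = (a+b)+1 from rfl, Nat.choose_succ_succ]
    have h2 : a.choose r ≤ (a+b).choose r := Nat.choose_le_choose r (by omega)
    calc a.choose (r+1) + (b+1) * a.choose r
        = (a.choose (r+1) + b * a.choose r) + a.choose r := by ring
      _ ≤ (a+b).choose (r+1) + (a+b).choose r := by omega
      _ = (a+(b+1)).choose (r+1) := by omega

lemma two_mul_choose_two (n : ℕ) : 2 * (n+1).choose 2 = (n+1) * n := by
  induction n with
  | zero => rfl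
  | succ n ih =>
    rw [show n+1+1 = (n+1)+1 from rfl, Nat.choose_succ_succ, Nat.mul_add, ih, Nat.choose_one_right]
    ring

lemma six_mul_choose_three (n : ℕ) : 6 * (n+2).choose 3 = (n+2)*(n+1)*n := by
  induction n with
  | zero => rfl
  | succ n ih =>
    rw [show n+1+2 = (n+2)+1 from rfl, Nat.choose_succ_succ, Nat.mul_add, ih,
      show (6:ℕ) = 3*2 by rfl, Nat.mul_assoc, two_mul_choose_two]
    ring

open Finset in
lemma vander3 (a b r : ℕ) (hr : 3 ≤ r) :
    a.choose r + b * a.choose (r-1) + a * b.choose (r-1) ≤ (a+b).choose r := by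
  rw [Nat.add_choose_eq]
  have hsub : ({(r,0), (r-1,1), (1,r-1)} : Finset (ℕ×ℕ)) ⊆ antidiagonal r := by
    intro x hx
    simp only [Finset.mem_insert, Finset.mem_singleton] at hx
    rcases hx with h | h | h <;> subst h <;> simp [Finset.mem_antidiagonal] <;> omega
  have hle := Finset.sum_le_sum_of_subset (f := fun ij : ℕ×ℕ => a.choose ij.1 * b.choose ij.2) hsub
  refine le_trans ?_ hle
  rw [Finset.sum_insert (by simp; omega), Finset.sum_insert (by simp; omega),
    Finset.sum_singleton]
  simp [Nat.choose_one_right]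
  ring_nf
  omega

lemma choose_rp1_rm1 {r j : ℕ} (hr : 3 ≤ r) (hj : r+1 ≤ j) : r ≤ j.choose (r-1) := by
  have h1 : (r+1).choose (r-1) = (r+1).choose 2 := by
    have := Nat.choose_symm (n := r+1) (k := 2) (by omega)
    rwa [show r+1-2 = r-1 by omega] at this
  have h2 : 2 * ((r+1).choose 2) = (r+1) * r := two_mul_choose_two r
  have h3 : (r+1).choose (r-1) ≤ j.choose (r-1) := Nat.choose_le_choose _ hj
  nlinarith [h3, h1, h2]

/-- descending tangent for regime II -/
lemma TIIdown (r j : ℕ) (hr : 3 ≤ r) (hj : r+1 ≤ j) :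
    ∀ d m, m + d = j → 1 ≤ m → j.choose r ≤ gg r m + (j - m) * j.choose (r-1) := by
  intro d
  induction d with
  | zero =>
    intro m hm _
    have : m = j := by omega
    subst this
    simp [gg_of_gt (show r < m by omega)]
  | succ d ih =>
    intro m hm hm1
    have hC1 : r ≤ j.choose (r-1) := choose_rp1_rm1 hr hj
    have ihm := ih (m+1) (by omega) (by omega)
    have hstep : gg r (m+1) ≤ gg r m + j.choose (r-1) := by
      by_cases h1 : m + 1 ≤ r
      · simp only [gg, if_pos h1, if_pos (show m ≤ r by omega)]
        omega
      · by_cases h2 : m ≤ r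
        · have hmr : m = r := by omega
          simp only [gg, if_neg h1, if_pos h2]
          subst hmr
          rw [Nat.choose_succ_self_right]
          omega
        · simp only [gg, if_neg h1, if_neg h2]
          have hr' : r - 1 + 1 = r := by omega
          have hmono : m.choose (r-1) ≤ j.choose (r-1) := Nat.choose_le_choose _ (by omega)
          calc (m+1).choose r = (m+1).choose (r-1+1) := by rw [hr']
            _ = m.choose (r-1) + m.choose (r-1+1) := Nat.choose_succ_succ _ _
            _ = m.choose (r-1) + m.choose r := by rw [hr']
            _ ≤ m.choose r + j.choose (r-1) := by omega
    have hco : (j - (m+1)) * j.choose (r-1) + j.choose (r-1) = (j - m) * j.choose (r-1) := by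
      have h : (j - (m+1)) + 1 = j - m := by omega
      rw [← h, Nat.add_mul, Nat.one_mul]
    omega

/-- per-period bound: `(k-2)·max(j, C(j,r-1)) ≤ C(k-1,r)` -/
lemma perPeriod (r k j : ℕ) (hr : 3 ≤ r) (hk : r+4 ≤ k) (hj2 : 2 ≤ j) (hj : 2*j ≤ k-1) :
    (k-2) * max j (j.choose (r-1)) ≤ (k-1).choose r := by
  have hmid : (k-1).choose 2 ≤ (k-1).choose r := choose_mid (by omega) (by omega)
  rcases le_total (j.choose (r-1)) j with h | h
  · rw [max_eq_left h]
    have e1 : 2 * (k-1).choose 2 = (k-1)*(k-2) := by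
      have := two_mul_choose_two (k-2)
      rwa [show k-2+1 = k-1 by omega] at this
    have h2 : (k-2)*(2*j) ≤ (k-2)*(k-1) := Nat.mul_le_mul_left _ hj
    nlinarith [hmid, e1, h2]
  · rw [max_eq_right h]
    -- r * C(j,r-1) ≤ C(2j-1, r-1) ≤ C(k-2, r-1)
    have hpc := pascal_chain j (r-2) (j-1)
    rw [show r-2+1 = r-1 by omega, show j+(j-1) = 2*j-1 by omega] at hpc
    have hid := Nat.choose_succ_right_eq j (r-2)
    rw [show r-2+1 = r-1 by omega] at hid
    -- hid : j.choose (r-1) * (r-1) = j.choose (r-2) * (j - (r-2))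
    have h5 : (r-1) * j.choose (r-1) ≤ (j-1) * j.choose (r-2) := by
      have hle : j.choose (r-2) * (j-(r-2)) ≤ j.choose (r-2) * (j-1) := by
        apply Nat.mul_le_mul_left
        omega
      calc (r-1) * j.choose (r-1) = j.choose (r-1) * (r-1) := by ring
        _ = j.choose (r-2) * (j - (r-2)) := hid
        _ ≤ j.choose (r-2) * (j-1) := hle
        _ = (j-1) * j.choose (r-2) := by ring
    have h6 : r * j.choose (r-1) ≤ (2*j-1).choose (r-1) := by
      have hsplit : r * j.choose (r-1) = j.choose (r-1) + (r-1) * j.choose (r-1) :=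
        pred_mul _ _ (by omega)
      omega
    have h7 : (2*j-1).choose (r-1) ≤ (k-2).choose (r-1) := Nat.choose_le_choose _ (by omega)
    have hmul := Nat.add_one_mul_choose_eq (k-2) (r-1)
    rw [show k-2+1 = k-1 by omega, show r-1+1 = r by omega] at hmul
    -- hmul : (k-1) * (k-2).choose (r-1) = (k-1).choose r * r
    have hfin : r * ((k-2) * j.choose (r-1)) ≤ r * ((k-1).choose r) := by
      calc r * ((k-2) * j.choose (r-1)) = (k-2) * (r * j.choose (r-1)) := by ring
        _ ≤ (k-2) * ((k-2).choose (r-1)) := Nat.mul_le_mul_left _ (le_trans h6 h7)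
        _ ≤ (k-1) * ((k-2).choose (r-1)) := Nat.mul_le_mul_right _ (by omega)
        _ = r * ((k-1).choose r) := by rw [hmul]; ring
    exact Nat.le_of_mul_le_mul_left hfin (by omega)

set_option maxHeartbeats 1000000 in
lemma keyLemma (r k j m : ℕ) (hr : 3 ≤ r) (hk : r+4 ≤ k) (hj2 : 2 ≤ j) (hj : 2*j ≤ k-1)
    (hm : 1 ≤ m) :
    max ((k-j).choose 2) ((k-j).choose r) + (j-2+m) * max j (j.choose (r-1)) + r.choose 2
      ≤ (k-1).choose r + gg r m := by
  rcases le_or_gt j r with hjr | hjr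
  · -- Regime I : j ≤ r, Ms = j
    have hMs : max j (j.choose (r-1)) = j := by
      apply max_eq_left
      rcases lt_trichotomy j (r-1) with h | h | h
      · rw [Nat.choose_eq_zero_of_lt h]; omega
      · rw [← h, Nat.choose_self]; omega
      · have hjr' : j = r := by omega
        have h1 : j.choose (r-1) = j.choose 1 := by
          rw [show r - 1 = j - 1 by omega, ← Nat.choose_symm (show 1 ≤ j by omega)]
        rw [h1, Nat.choose_one_right]
    rw [hMs]
    have hT : (j-2+m)*j + (r+1) ≤ (r+j-1)*j + gg r m := by
      rcases le_or_gt m (r+1) with hm2 | hm2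
      · have hd : r+1 ≤ gg r m + (r+1-m)*j := by
          by_cases h1 : m ≤ r
          · simp only [gg, if_pos h1]
            have h2 : (r+1-m)*2 ≤ (r+1-m)*j := Nat.mul_le_mul_left _ hj2
            omega
          · have hme : m = r+1 := by omega
            subst hme
            simp only [gg, if_neg h1, Nat.choose_succ_self_right]
            omega
        have hsplit : (r+j-1)*j = (j-2+m)*j + (r+1-m)*j := by
          rw [← Nat.add_mul]; congr 1; omega
        omega
      · rw [gg_of_gt (by omega)]
        have hpc := pascal_chain (r+1) (r-1) (m-(r+1))
        rw [show r-1+1 = r by omega, show r+1+(m-(r+1)) = m by omega] at hpc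
        have hrc : r ≤ (r+1).choose (r-1) := choose_rp1_rm1 hr le_rfl
        have hjj : (m-(r+1))*j ≤ (m-(r+1)) * (r+1).choose (r-1) :=
          Nat.mul_le_mul_left _ (by omega)
        have hcs : (r+1).choose r = r+1 := Nat.choose_succ_self_right r
        have hsplit : (j-2+m)*j = (r+j-1)*j + (m-(r+1))*j := by
          rw [← Nat.add_mul]; congr 1; omega
        omega
    have hstar : max ((k-j).choose 2) ((k-j).choose r) + (r+j-1)*j + r.choose 2
        ≤ (k-1).choose r + (r+1) := by
      rcases le_or_gt (k-j) (r+1) with hs | hs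
      · -- s ≤ r+1
        have hs4 : 4 ≤ k-j := by omega
        have hCs : max ((k-j).choose 2) ((k-j).choose r) ≤ (k-j).choose 2 := by
          apply max_le le_rfl
          rcases le_or_gt (k-j) r with hsr | hsr
          · have h1 : (k-j).choose r ≤ 1 := by
              rcases Nat.eq_or_lt_of_le hsr with h | h
              · rw [h, Nat.choose_self]
              · rw [Nat.choose_eq_zero_of_lt h]
                omega
            have e : 2 * (k-j).choose 2 = (k-j)*(k-j-1) := by
              have h := two_mul_choose_two (k-j-1)
              rwa [show k-j-1+1 = k-j by omega] at h
            have hmm : (k-j)*2 ≤ (k-j)*(k-j-1) := Nat.mul_le_mul_left _ (by omega)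
            omega
          · have hsr' : k-j = r+1 := by omega
            rw [hsr', Nat.choose_succ_self_right]
            have e : 2 * (r+1).choose 2 = (r+1)*r := two_mul_choose_two r
            have hmm : (r+1)*2 ≤ (r+1)*r := Nat.mul_le_mul_left _ (by omega)
            omega
        have hmain : (k-j).choose 2 + (r+j-1)*j + r.choose 2 ≤ (k-1).choose r + (r+1) := by
          rcases le_or_gt 10 k with hk10 | hk10
          · obtain ⟨K, rfl⟩ : ∃ K, k = K+10 := ⟨k-10, by omega⟩
            have hj3 : 3 ≤ j := by omega
            have h1 : (K+10-j).choose 2 ≤ (K+7).choose 2 := Nat.choose_le_choose _ (by omega)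
            have e1 : 2 * (K+7).choose 2 = (K+7)*(K+6) := by
              have h := two_mul_choose_two (K+6)
              rwa [show K+6+1 = K+7 by omega] at h
            have h2 : r.choose 2 ≤ (K+6).choose 2 := Nat.choose_le_choose _ (by omega)
            have e2 : 2 * (K+6).choose 2 = (K+6)*(K+5) := by
              have h := two_mul_choose_two (K+5)
              rwa [show K+5+1 = K+6 by omega] at h
            have h3 : (K+9).choose 3 ≤ (K+9).choose r := choose_mid hr (by omega)
            have e3 : 6 * (K+9).choose 3 = (K+9)*(K+8)*(K+7) := by
              have h := six_mul_choose_three (K+7)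
              rwa [show K+7+2 = K+9 by omega, show K+7+1 = K+8 by omega] at h
            rw [show K+10-1 = K+9 by omega]
            obtain ⟨r', rfl⟩ : ∃ r', r = r'+3 := ⟨r-3, by omega⟩
            obtain ⟨j', rfl⟩ : ∃ j', j = j'+3 := ⟨j-3, by omega⟩
            rw [show r'+3+(j'+3)-1 = r'+j'+5 by omega]
            have c1 : 6 * ((K+10-(j'+3)).choose 2) ≤ 3*((K+7)*(K+6)) := by omega
            have c2 : 6 * ((r'+3).choose 2) ≤ 3*((K+6)*(K+5)) := by
              have hb : (r'+3).choose 2 ≤ (K+6).choose 2 := h2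
              omega
            have c3 : (K+9)*(K+8)*(K+7) ≤ 6 * ((K+9).choose (r'+3)) := by omega
            have c4 : 6*((r'+j'+5)*(j'+3)) ≤ 6*((K+j'+8)*(j'+3)) := by
              have h := Nat.mul_le_mul_right (j'+3) (show r'+j'+5 ≤ K+j'+8 by omega)
              omega
            have c5 : 3*((K+7)*(K+6)) + 3*((K+6)*(K+5)) + 6*((K+j'+8)*(j'+3))
                ≤ (K+9)*(K+8)*(K+7) := by
              have hxy : 2*j' ≤ K+3 := by omega
              zify at hxy ⊢
              have p1 : (0:ℤ) ≤ ((K:ℤ)+3-2*j')*(3*(K:ℤ)+25) := by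
                apply mul_nonneg <;> linarith
              have p2 : (0:ℤ) ≤ ((K:ℤ)+3-2*j')*(j':ℤ) := by
                apply mul_nonneg
                · linarith
                · positivity
              have p3 : (0:ℤ) ≤ (K:ℤ)*(K:ℤ)*(K:ℤ) := by positivity
              have p4 : (0:ℤ) ≤ (K:ℤ)*(K:ℤ) := by positivity
              have p5 : (0:ℤ) ≤ (K:ℤ) := by positivity
              nlinarith [p1, p2, p3, p4, p5]
            omega
          · -- k ≤ 9 : finitely many cases
            have hk7 : 7 ≤ k := by omega
            have hk9 : k ≤ 9 := by omega
            have hrk : r ≤ 5 := by omega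
            interval_cases k <;> interval_cases r <;> interval_cases j <;>
              first
              | (exfalso; omega)
              | decide
        omega
      · -- s ≥ r+2
        have hCs : max ((k-j).choose 2) ((k-j).choose r) ≤ (k-j).choose r :=
          max_le (choose_mid (by omega) (by omega)) le_rfl
        have hpc := pascal_chain (k-j) (r-1) (j-1)
        rw [show r-1+1 = r by omega, show k-j+(j-1) = k-1 by omega] at hpc
        have hq : (r+2).choose 2 ≤ (k-j).choose (r-1) := by
          calc (r+2).choose 2 ≤ (k-j).choose 2 := Nat.choose_le_choose _ (by omega)
            _ ≤ (k-j).choose (r-1) := choose_mid (by omega) (by omega)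
        have hq2 : (j-1)*(r+2).choose 2 ≤ (j-1)*(k-j).choose (r-1) :=
          Nat.mul_le_mul_left _ hq
        have harith : (r+j-1)*j + r.choose 2 ≤ (j-1)*(r+2).choose 2 + (r+1) := by
          obtain ⟨r', rfl⟩ : ∃ r', r = r'+3 := ⟨r-3, by omega⟩
          obtain ⟨j', rfl⟩ : ∃ j', j = j'+2 := ⟨j-2, by omega⟩
          rw [show r'+3+(j'+2)-1 = r'+j'+4 by omega, show j'+2-1 = j'+1 by omega]
          have e5 : 2 * (r'+5).choose 2 = (r'+5)*(r'+4) := by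
            have h := two_mul_choose_two (r'+4)
            rwa [show r'+4+1 = r'+5 by omega] at h
          have e6 : 2 * (r'+3).choose 2 = (r'+3)*(r'+2) := by
            have h := two_mul_choose_two (r'+2)
            rwa [show r'+2+1 = r'+3 by omega] at h
          have e7 : 2 * ((j'+1)*((r'+5).choose 2)) = (j'+1)*((r'+5)*(r'+4)) := by
            rw [show 2 * ((j'+1)*((r'+5).choose 2)) = (j'+1)*(2*((r'+5).choose 2)) by ring, e5]
          have hba : j' ≤ r'+1 := by omega
          zify at e6 e7 hba ⊢
          have p1 : (0:ℤ) ≤ ((r':ℤ)+1-j')*(j':ℤ) := by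
            apply mul_nonneg
            · linarith
            · positivity
          have p2 : (0:ℤ) ≤ (r':ℤ)*(r':ℤ)*(j':ℤ) := by positivity
          have p3 : (0:ℤ) ≤ (r':ℤ)*(j':ℤ) := by positivity
          have p4 : (0:ℤ) ≤ (r':ℤ) := by positivity
          have p5 : (0:ℤ) ≤ (j':ℤ) := by positivity
          nlinarith [e6, e7, p1, p2, p3, p4, p5]
        omega
    omega
  · -- Regime II : j ≥ r+1, Ms = C(j,r-1)
    have hjr2 : r+1 ≤ j := hjr
    have hMs : max j (j.choose (r-1)) = j.choose (r-1) := by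
      apply max_eq_right
      have h1 : j.choose 1 ≤ j.choose (r-1) := choose_mid (by omega) (by omega)
      rwa [Nat.choose_one_right] at h1
    rw [hMs]
    have hT : (j-2+m) * j.choose (r-1) + j.choose r ≤ (2*j-2) * j.choose (r-1) + gg r m := by
      rcases le_or_gt m j with hmj | hmj
      · have hd := TIIdown r j hr hjr2 (j-m) m (by omega) hm
        have hsplit : (2*j-2) * j.choose (r-1)
            = (j-2+m) * j.choose (r-1) + (j-m) * j.choose (r-1) := by
          rw [← Nat.add_mul]; congr 1; omega
        omega
      · rw [gg_of_gt (by omega)]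
        have hpc := pascal_chain j (r-1) (m-j)
        rw [show r-1+1 = r by omega, show j+(m-j) = m by omega] at hpc
        have hsplit : (j-2+m) * j.choose (r-1)
            = (2*j-2) * j.choose (r-1) + (m-j) * j.choose (r-1) := by
          rw [← Nat.add_mul]; congr 1; omega
        omega
    have hstar : max ((k-j).choose 2) ((k-j).choose r) + (2*j-2) * j.choose (r-1) + r.choose 2
        ≤ (k-1).choose r + j.choose r := by
      have hsj : j+1 ≤ k-j := by omega
      have hCs : max ((k-j).choose 2) ((k-j).choose r) ≤ (k-j).choose r :=
        max_le (choose_mid (by omega) (by omega)) le_rfl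
      have hv := vander3 (k-j-1) j r hr
      rw [show k-j-1+j = k-1 by omega] at hv
      have hps : (k-j).choose r = (k-j-1).choose (r-1) + (k-j-1).choose r := by
        obtain ⟨S, hS⟩ : ∃ S, k-j = S+1 := ⟨k-j-1, by omega⟩
        obtain ⟨R, hR⟩ : ∃ R, r = R+1 := ⟨r-1, by omega⟩
        rw [hS, hR]
        simp only [Nat.add_sub_cancel]
        exact Nat.choose_succ_succ _ _
      have hcc : j.choose (r-1) ≤ (k-j-1).choose (r-1) := Nat.choose_le_choose _ (by omega)
      have hrc : r.choose 2 ≤ j.choose (r-1) := by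
        calc r.choose 2 ≤ (r+1).choose 2 := Nat.choose_le_choose _ (by omega)
          _ = (r+1).choose (r-1) := by
              rw [← Nat.choose_symm (show 2 ≤ r+1 by omega), show r+1-2 = r-1 by omega]
          _ ≤ j.choose (r-1) := Nat.choose_le_choose _ (by omega)
      have h6 : (k-j-1).choose (r-1) + (j-1) * j.choose (r-1) ≤ j * (k-j-1).choose (r-1) := by
        have h7 : (j-1) * j.choose (r-1) ≤ (j-1) * (k-j-1).choose (r-1) :=
          Nat.mul_le_mul_left _ hcc
        have h8 : j * (k-j-1).choose (r-1)
            = (k-j-1).choose (r-1) + (j-1) * (k-j-1).choose (r-1) :=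
          pred_mul _ _ (by omega)
        omega
      have h9 : j * j.choose (r-1) ≤ (k-j-1) * j.choose (r-1) :=
        Nat.mul_le_mul_right _ (by omega)
      have h10 : (j-1) * j.choose (r-1) + j * j.choose (r-1)
          = (2*j-2) * j.choose (r-1) + 1 * j.choose (r-1) :=
        mul_split _ _ _ _ _ (by omega)
      rw [Nat.one_mul] at h10
      omega
    omega

theorem stmt_12 (r k t n s : ℕ) (hr : 3 ≤ r) (hk : r + 4 ≤ k)
    (ht : t = (k - 1) / 2) (hn : k ≤ n)
    (hs1 : k - t ≤ s) (hs2 : s ≤ k - 2) :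
    (uEG r n k s : ℤ) ≤ (fEG r n k : ℤ) - r.choose 2 := by
  subst ht
  set q := (n-1)/(k-2) with hqdef
  set P := (k-2)*q with hPdef
  have hdm : P + (n-1)%(k-2) = n-1 := Nat.div_add_mod (n-1) (k-2)
  have hmod : (n-1)%(k-2) < k-2 := Nat.mod_lt _ (by omega)
  have hq1 : 1 ≤ q := (Nat.one_le_div_iff (by omega)).mpr (by omega)
  have hP1 : k-2 ≤ P := by
    calc k-2 = (k-2)*1 := (Nat.mul_one _).symm
      _ ≤ (k-2)*q := Nat.mul_le_mul_left _ hq1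
  set m := n - P with hmdef
  have hm1 : 1 ≤ m := by omega
  set j := k - s with hjdef
  have hj2 : 2 ≤ j := by omega
  have hjk : 2*j ≤ k-1 := by omega
  have hkey := keyLemma r k j m hr hk hj2 hjk hm1
  rw [show k - j = s by omega] at hkey
  have hF1 := perPeriod r k j hr hk hj2 hjk
  set q' := q - 1 with hq'def
  have hq' : q = q'+1 := by omega
  have hP' : P = (k-2)*q' + (k-2) := by rw [hPdef, hq', Nat.mul_add, Nat.mul_one]
  have hns : n - s = (k-2)*q' + (j-2+m) := by omega
  set Ms := max j (j.choose (r-1)) with hMsdef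
  have HU : uEG r n k s + r.choose 2 ≤ fEG r n k := by
    have e1 : uEG r n k s = max (s.choose 2) (s.choose r) + ((k-2)*q' + (j-2+m)) * Ms := by
      rw [uEG, ← hjdef, ← hMsdef, hns]
    have e2 : ((k-2)*q' + (j-2+m)) * Ms = q'*((k-2)*Ms) + (j-2+m)*Ms := by ring
    have e3 : q'*((k-2)*Ms) ≤ q'*((k-1).choose r) := Nat.mul_le_mul_left _ hF1
    have e4 : fEG r n k = q'*((k-1).choose r) + ((k-1).choose r + gg r m) := by
      rw [fEG_eq, ← hqdef, ← hPdef, ← hmdef, hq', Nat.add_mul, Nat.one_mul]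
      omega
    rw [e1, e2, e4]
    omega
  omega
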